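/- Let t_1 < t_2 < ... < t_{d+3} be real numbers and let v_i = (a_i, b_i) ∈ R^2 for 1 ≤ i ≤ d+1, where a_i = (−1)^{d+1} (∏_{j≠i, j≤d+1} (t_{d+2} − t_j)) / (∏_{k≠i, k≤d+1} (t_k − t_i)) and b_i = (−1)^{d+1} (∏_{j≠i, j≤d+1} (t_{d+3} − t_j)) / (∏_{k≠i, k≤d+1} (t_k − t_i)). Then for each 1 ≤ i ≤ d+1, a_i and b_i are both positive if d+1+i is odd and both negative if d+1+i is even; moreover the slopes s_i = b_i / a_i satisfy s_1 > s_2 > ... > s_{d+1} > 0. -/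

import Mathlib

/-- Sign pattern and slope monotonicity of the Gale transform vectors of d+3 points on the
d-dimensional moment curve. -/
theorem gale_moment_curve_signs_slopes (d : ℕ) (t : Fin (d + 3) → ℝ) (ht : StrictMono t)
    (a b : Fin (d + 1) → ℝ)
    (ha : ∀ i : Fin (d + 1), a i = (-1 : ℝ) ^ (d + 1) *
        (∏ j ∈ Finset.univ.erase i, (t ⟨d + 1, by omega⟩ - t (Fin.castLE (by omega) j))) /
        (∏ k ∈ Finset.univ.erase i, (t (Fin.castLE (by omega) k) - t (Fin.castLE (by omega) i))))
    (hb : ∀ i : Fin (d + 1), b i = (-1 : ℝ) ^ (d + 1) *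
        (∏ j ∈ Finset.univ.erase i, (t ⟨d + 2, by omega⟩ - t (Fin.castLE (by omega) j))) /
        (∏ k ∈ Finset.univ.erase i, (t (Fin.castLE (by omega) k) - t (Fin.castLE (by omega) i)))) :
    (∀ i : Fin (d + 1),
      (Odd (d + 1 + ((i : ℕ) + 1)) → 0 < a i ∧ 0 < b i) ∧
      (Even (d + 1 + ((i : ℕ) + 1)) → a i < 0 ∧ b i < 0)) ∧
    (∀ i j : Fin (d + 1), i < j → b j / a j < b i / a i) ∧
    (∀ i : Fin (d + 1), 0 < b i / a i) := by
  classical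
  have hle : d + 1 ≤ d + 3 := by omega
  set c : Fin (d + 1) → Fin (d + 3) := Fin.castLE hle with hc
  set A : ℝ := t ⟨d + 1, by omega⟩ with hAdef
  set B : ℝ := t ⟨d + 2, by omega⟩ with hBdef
  set Na : Fin (d + 1) → ℝ := fun i => ∏ j ∈ Finset.univ.erase i, (A - t (c j)) with hNadef
  set Nb : Fin (d + 1) → ℝ := fun i => ∏ j ∈ Finset.univ.erase i, (B - t (c j)) with hNbdef
  set D : Fin (d + 1) → ℝ := fun i => ∏ k ∈ Finset.univ.erase i, (t (c k) - t (c i)) with hDdef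
  have ha' : ∀ i, a i = (-1 : ℝ) ^ (d + 1) * Na i / D i := by
    intro i; rw [ha i]
  have hb' : ∀ i, b i = (-1 : ℝ) ^ (d + 1) * Nb i / D i := by
    intro i; rw [hb i]
  have htcA : ∀ j : Fin (d + 1), t (c j) < A := by
    intro j
    exact ht (Fin.lt_def.mpr (by simp only [hc, Fin.coe_castLE]; omega))
  have htcB : ∀ j : Fin (d + 1), t (c j) < B := by
    intro j
    exact ht (Fin.lt_def.mpr (by simp only [hc, Fin.coe_castLE]; omega))
  have hAB : A < B := ht (Fin.lt_def.mpr (by simp only []; omega))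
  have hNa_pos : ∀ i, 0 < Na i := fun i =>
    Finset.prod_pos fun j _ => sub_pos.2 (htcA j)
  have hNb_pos : ∀ i, 0 < Nb i := fun i =>
    Finset.prod_pos fun j _ => sub_pos.2 (htcB j)
  have hcmono : ∀ {i j : Fin (d + 1)}, i < j → t (c i) < t (c j) := by
    intro i j hij
    exact ht (Fin.lt_def.mpr (by simp only [hc, Fin.coe_castLE]; exact hij))
  -- sign of D
  have hE_pos : ∀ i : Fin (d + 1), 0 < (-1 : ℝ) ^ (i : ℕ) * D i := by
    intro i
    have hsplit : Finset.univ.erase i = Finset.Iio i ∪ Finset.Ioi i := by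
      ext k
      simp only [Finset.mem_erase, Finset.mem_union, Finset.mem_Iio, Finset.mem_Ioi,
        Finset.mem_univ, and_true]
      omega
    have hdisj : Disjoint (Finset.Iio i) (Finset.Ioi i) := by
      rw [Finset.disjoint_left]
      intro k hk hk'
      rw [Finset.mem_Iio] at hk
      rw [Finset.mem_Ioi] at hk'
      exact absurd (hk.trans hk') (lt_irrefl _)
    have h1 : ∏ k ∈ Finset.Iio i, (t (c k) - t (c i)) =
        (-1 : ℝ) ^ (i : ℕ) * ∏ k ∈ Finset.Iio i, (t (c i) - t (c k)) := by
      rw [← Fin.card_Iio i, ← Finset.prod_const, ← Finset.prod_mul_distrib]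
      exact Finset.prod_congr rfl fun k _ => by ring
    have h2 : 0 < ∏ k ∈ Finset.Iio i, (t (c i) - t (c k)) :=
      Finset.prod_pos fun k hk => sub_pos.2 (hcmono (Finset.mem_Iio.1 hk))
    have h3 : 0 < ∏ k ∈ Finset.Ioi i, (t (c k) - t (c i)) :=
      Finset.prod_pos fun k hk => sub_pos.2 (hcmono (Finset.mem_Ioi.1 hk))
    have hDeq : D i = (-1 : ℝ) ^ (i : ℕ) *
        ((∏ k ∈ Finset.Iio i, (t (c i) - t (c k))) *
          ∏ k ∈ Finset.Ioi i, (t (c k) - t (c i))) := by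
      rw [hDdef]
      simp only
      rw [hsplit, Finset.prod_union hdisj, h1, mul_assoc]
    rw [hDeq, ← mul_assoc, ← pow_add]
    rw [Even.neg_one_pow ⟨(i : ℕ), rfl⟩, one_mul]
    exact mul_pos h2 h3
  have hD_ne : ∀ i, D i ≠ 0 := by
    intro i h
    have h' := hE_pos i
    rw [h, mul_zero] at h'
    exact lt_irrefl 0 h'
  -- key sign formula
  have key : ∀ (i : Fin (d + 1)) (N : ℝ),
      (-1 : ℝ) ^ (d + 1) * N / D i =
        (-1 : ℝ) ^ (d + 1 + (i : ℕ)) * (N / ((-1 : ℝ) ^ (i : ℕ) * D i)) := by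
    intro i N
    have h1 : ((-1 : ℝ) ^ (i : ℕ)) ≠ 0 := pow_ne_zero _ (by norm_num)
    rw [← mul_div_assoc, div_eq_div_iff (hD_ne i) (mul_ne_zero h1 (hD_ne i))]
    ring
  have hka : ∀ i, a i = (-1 : ℝ) ^ (d + 1 + (i : ℕ)) * (Na i / ((-1 : ℝ) ^ (i : ℕ) * D i)) := by
    intro i; rw [ha' i]; exact key i (Na i)
  have hkb : ∀ i, b i = (-1 : ℝ) ^ (d + 1 + (i : ℕ)) * (Nb i / ((-1 : ℝ) ^ (i : ℕ) * D i)) := by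
    intro i; rw [hb' i]; exact key i (Nb i)
  -- slopes
  have hs : ∀ i, b i / a i = Nb i / Na i := by
    intro i
    rw [hka i, hkb i]
    have h1 : ((-1 : ℝ) ^ (d + 1 + (i : ℕ))) ≠ 0 := pow_ne_zero _ (by norm_num)
    have h2 : ((-1 : ℝ) ^ (i : ℕ) * D i) ≠ 0 := ne_of_gt (hE_pos i)
    have h3 : Na i ≠ 0 := ne_of_gt (hNa_pos i)
    have h4 := hD_ne i
    field_simp
  refine ⟨?_, ?_, ?_⟩
  · intro i
    constructor
    · intro hodd
      obtain ⟨k, hk⟩ := hodd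
      have heven : Even (d + 1 + (i : ℕ)) := ⟨k, by omega⟩
      rw [hka i, hkb i, Even.neg_one_pow heven]
      simp only [one_mul]
      exact ⟨div_pos (hNa_pos i) (hE_pos i), div_pos (hNb_pos i) (hE_pos i)⟩
    · intro hev
      obtain ⟨k, hk⟩ := hev
      have hodd : Odd (d + 1 + (i : ℕ)) := ⟨k - 1, by omega⟩
      rw [hka i, hkb i, Odd.neg_one_pow hodd, neg_one_mul, neg_one_mul]
      exact ⟨neg_lt_zero.mpr (div_pos (hNa_pos i) (hE_pos i)),
        neg_lt_zero.mpr (div_pos (hNb_pos i) (hE_pos i))⟩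
  · intro i j hij
    rw [hs i, hs j, div_lt_div_iff₀ (hNa_pos j) (hNa_pos i)]
    have eA : ∀ m : Fin (d + 1), Na m * (A - t (c m)) = ∏ k, (A - t (c k)) := fun m =>
      Finset.prod_erase_mul _ _ (Finset.mem_univ m)
    have eB : ∀ m : Fin (d + 1), Nb m * (B - t (c m)) = ∏ k, (B - t (c k)) := fun m =>
      Finset.prod_erase_mul _ _ (Finset.mem_univ m)
    have h1 : (Nb j * Na i) * ((B - t (c j)) * (A - t (c i))) =
        (∏ k, (B - t (c k))) * ∏ k, (A - t (c k)) := by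
      linear_combination (Na i * (A - t (c i))) * eB j + (∏ k, (B - t (c k))) * eA i
    have h2 : (Nb i * Na j) * ((B - t (c i)) * (A - t (c j))) =
        (∏ k, (B - t (c k))) * ∏ k, (A - t (c k)) := by
      linear_combination (Na j * (A - t (c j))) * eB i + (∏ k, (B - t (c k))) * eA j
    have hp : 0 < (B - t (c j)) * (A - t (c i)) :=
      mul_pos (sub_pos.2 (htcB j)) (sub_pos.2 (htcA i))
    have hqp : (B - t (c i)) * (A - t (c j)) < (B - t (c j)) * (A - t (c i)) := by
      nlinarith [mul_pos (sub_pos.2 hAB) (sub_pos.2 (hcmono hij))]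
    have hY : 0 < Nb i * Na j := mul_pos (hNb_pos i) (hNa_pos j)
    nlinarith [h1, h2, hp, hY, mul_lt_mul_of_pos_left hqp hY]
  · intro i
    rw [hs i]
    exact div_pos (hNb_pos i) (hNa_pos i)
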